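/- Let θ ∈ (0,1) and 0 < σ ≤ 1. For i ∈ ℤ and x ≥ 0 set f_i(x,σ) := −(σ(1−θ)/13)·x·⟨i⟩^{θ/2} + ln(1 + x²⟨i⟩²), and set i♯(σ) := ( (312/(σθ(1−θ))) · ln(156/(σθ(1−θ))) )^{2/θ}. Then for every finitely supported ℓ : ℤ → ℤ one has Σ_{i∈ℤ} f_i(|ℓ_i|, σ) ≤ 21 · i♯(σ) · ln i♯(σ). -/

import Mathlib

open scoped ENNReal BigOperators Classical

noncomputable section

/-- Multi-indices: finitely supported functions `ℤ → ℕ`. -/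
abbrev MIdx := ℤ →₀ ℕ

/-- Total degree `|α| = Σ_j α_j`. -/
def deg (α : MIdx) : ℕ := ∑ j ∈ α.support, α j

/-- Momentum `π(α - β) = Σ_j j (α_j - β_j)`. -/
def mom (α β : MIdx) : ℤ :=
  ∑ j ∈ α.support ∪ β.support, j * ((α j : ℤ) - (β j : ℤ))

/-- `⟨j⟩ = max(|j|, 1)` as a real number. -/
def jb (j : ℤ) : ℝ := max |(j : ℝ)| 1

/-- The weight `u₀(r)_j = r ⟨j⟩^{-p} e^{-(a|j| + s ⟨j⟩^θ)}`. -/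
def u0 (θ p a r s : ℝ) (j : ℤ) : ℝ :=
  r * (jb j ^ p * Real.exp (a * |(j : ℝ)| + s * jb j ^ θ))⁻¹

/-- The coefficient weight `c^{(j)}_{r,s,η}(α,β) = u₀^{α+β-2e_j} e^{η |π(α-β)|}`. -/
def cwt (θ p a r s η : ℝ) (j : ℤ) (α β : MIdx) : ℝ :=
  (∏ i ∈ insert j (α.support ∪ β.support),
      u0 θ p a r s i ^ (((α i : ℤ) + (β i : ℤ)) - if i = j then 2 else 0)) *
    Real.exp (η * |(mom α β : ℝ)|)

/-- The majorant norm `|H|_{r,s,η} = sup_j Σ_{α,β} |H_{α,β}| β_j u₀^{α+β-2e_j} e^{η|π(α-β)|}`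
(with values in `ℝ≥0∞`). -/
def hnorm (θ p a r s η : ℝ) (H : MIdx → MIdx → ℂ) : ℝ≥0∞ :=
  ⨆ j : ℤ, ∑' q : MIdx × MIdx,
    ENNReal.ofReal (‖H q.1 q.2‖ * (q.2 j : ℝ) * cwt θ p a r s η j q.1 q.2)

/-- A family of coefficients is a Hamiltonian: mass conservation (`H_{α,β} = 0` unless
`|α| = |β|`) and the reality condition `H_{β,α} = conj (H_{α,β})`. -/
def IsHam (H : MIdx → MIdx → ℂ) : Prop :=
  (∀ α β : MIdx, deg α ≠ deg β → H α β = 0) ∧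
  (∀ α β : MIdx, H β α = (starRingEnd ℂ) (H α β))

/-- The set `D_γ` of `γ`-Diophantine frequencies. -/
def Dio (γ : ℝ) : Set (ℤ → ℝ) :=
  {ω | (∀ j : ℤ, |ω j - (j : ℝ) ^ 2| ≤ 1 / 2) ∧
    ∀ ℓ : ℤ →₀ ℤ, ℓ ≠ 0 →
      γ * ∏ n ∈ ℓ.support, (1 + (ℓ n : ℝ) ^ 2 * jb n ^ 2)⁻¹ <
        |∑ j ∈ ℓ.support, ω j * (ℓ j : ℝ)|}

/-- The sup distance `|ω - ω'|_∞` (with values in `ℝ≥0∞`). -/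
def dsup (ω ω' : ℤ → ℝ) : ℝ≥0∞ := ⨆ j : ℤ, ENNReal.ofReal |ω j - ω' j|

/-- The weighted Lipschitz norm
`‖H‖_{r,s,η} = sup_{ω ∈ D_γ} |H(ω)|_{r,s,η} + γ sup_{ω≠ω'} |H(ω)-H(ω')|_{r,s,η} / |ω-ω'|_∞`. -/
def hnormLip (γ θ p a r s η : ℝ) (H : (ℤ → ℝ) → MIdx → MIdx → ℂ) : ℝ≥0∞ :=
  (⨆ ω ∈ Dio γ, hnorm θ p a r s η (H ω)) +
    ENNReal.ofReal γ *
      ⨆ ω ∈ Dio γ, ⨆ ω' ∈ Dio γ,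
        hnorm θ p a r s η (fun α β => H ω α β - H ω' α β) / dsup ω ω'

/-- The function `f_i(x,σ) = -(σ(1-θ)/13) x ⟨i⟩^{θ/2} + ln(1 + x²⟨i⟩²)`. -/
def fAux (θ σ : ℝ) (i : ℤ) (x : ℝ) : ℝ :=
  -(σ * (1 - θ) / 13) * x * jb i ^ (θ / 2) + Real.log (1 + x ^ 2 * jb i ^ 2)

/-- The threshold `i♯(σ) = ((312/(σθ(1-θ))) ln(156/(σθ(1-θ))))^{2/θ}`. -/
def iSharp (θ σ : ℝ) : ℝ :=
  (312 / (σ * θ * (1 - θ)) * Real.log (156 / (σ * θ * (1 - θ)))) ^ (2 / θ)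

/-- Lemma 4.5 of [BMP]: for `θ ∈ (0,1)`, `0 < σ ≤ 1` and every finitely
supported `ℓ : ℤ → ℤ`, `Σ_i f_i(|ℓ_i|, σ) ≤ 21 i♯(σ) ln i♯(σ)`. -/
-- Uniform-in-x upper bound for a single term.
lemma fab_core1 (c M T x : ℝ) (hc : 0 < c) (hc1 : c ≤ 1) (hM : 1 ≤ M) (hT : 1 ≤ T) (hTM : T ≤ M)
    (hx : 0 ≤ x) :
    -c * x * T + Real.log (1 + x ^ 2 * M ^ 2) ≤
      2 * (Real.log 2 - Real.log c) + 2 * Real.log M := by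
  have hM0 : (0:ℝ) < M := by linarith
  have hT0 : (0:ℝ) < T := by linarith
  have h1 : (0:ℝ) < 1 + x * M := by positivity
  have hlog1 : Real.log (1 + x ^ 2 * M ^ 2) ≤ 2 * Real.log (1 + x * M) := by
    have hle : (1 + x ^ 2 * M ^ 2) ≤ (1 + x * M) ^ 2 := by nlinarith
    calc Real.log (1 + x ^ 2 * M ^ 2) ≤ Real.log ((1 + x * M) ^ 2) :=
          Real.log_le_log (by positivity) hle
      _ = 2 * Real.log (1 + x * M) := by rw [Real.log_pow]; push_cast; ring
  have hy : (0:ℝ) < (1 + x * M) * (c * T / (2 * M)) := by positivity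
  have h2 := Real.log_le_sub_one_of_pos hy
  have h3 : Real.log ((1 + x * M) * (c * T / (2 * M))) =
      Real.log (1 + x * M) + (Real.log c + Real.log T) - (Real.log 2 + Real.log M) := by
    rw [Real.log_mul (by positivity) (by positivity),
        Real.log_div (by positivity) (by positivity),
        Real.log_mul (ne_of_gt hc) (ne_of_gt hT0),
        Real.log_mul (by norm_num) (ne_of_gt hM0)]
    ring
  have hval : (1 + x * M) * (c * T / (2 * M)) = c * T / (2 * M) + c * T * x / 2 := by
    field_simp
  have hTlog : 0 ≤ Real.log T := Real.log_nonneg hT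
  have hcTM : c * T / (2 * M) ≤ 1 := by
    rw [div_le_one (by positivity)]
    nlinarith [mul_le_mul_of_nonneg_right hc1 (le_of_lt hT0)]
  rw [h3, hval] at h2
  linarith

-- The term is nonpositive once `c·T` dominates `4 + 2 log M`.
lemma fab_core2 (c M T x : ℝ) (hc : 0 < c) (hM : 1 ≤ M) (hx : 1 ≤ x)
    (hcT : 4 + 2 * Real.log M ≤ c * T) :
    -c * x * T + Real.log (1 + x ^ 2 * M ^ 2) ≤ 0 := by
  have hM0 : (0:ℝ) < M := by linarith
  have hx0 : (0:ℝ) < x := by linarith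
  have hlog1 : Real.log (1 + x ^ 2 * M ^ 2) ≤ 2 * Real.log (2 * x * M) := by
    have hle : (1 + x ^ 2 * M ^ 2) ≤ (2 * x * M) ^ 2 := by
      have hxM : 1 ≤ x * M := by nlinarith
      nlinarith [sq_nonneg (x * M - 1)]
    calc Real.log (1 + x ^ 2 * M ^ 2) ≤ Real.log ((2 * x * M) ^ 2) :=
          Real.log_le_log (by positivity) hle
      _ = 2 * Real.log (2 * x * M) := by rw [Real.log_pow]; push_cast; ring
  have hsplit : Real.log (2 * x * M) = Real.log 2 + Real.log x + Real.log M := by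
    rw [Real.log_mul (by positivity) (ne_of_gt hM0), Real.log_mul (by norm_num) (ne_of_gt hx0)]
  have hlx : Real.log x ≤ x - 1 := Real.log_le_sub_one_of_pos hx0
  have hl2 : Real.log 2 ≤ 1 := by
    have := Real.log_le_sub_one_of_pos (by norm_num : (0:ℝ) < 2); linarith
  have hlM : 0 ≤ Real.log M := Real.log_nonneg hM
  have hmul : x * (4 + 2 * Real.log M) ≤ x * (c * T) :=
    mul_le_mul_of_nonneg_left hcT (le_of_lt hx0)
  nlinarith [mul_nonneg (sub_nonneg.2 hx) hlM]

-- Threshold inequality: for `u ≥ A L`, `c u ≥ 4 + (4/θ) log u`.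
lemma fab_core3 (c θ A L u : ℝ) (hc : 0 < c) (hθ0 : 0 < θ) (hθ1 : θ < 1)
    (hA24 : c * θ * A = 24) (hL : 1 ≤ L) (hLA : Real.log A ≤ L + 1)
    (hLL : Real.log L ≤ L - 1) (hu : A * L ≤ u) :
    4 + (4 / θ) * Real.log u ≤ c * u := by
  have hcθ : 0 < c * θ := mul_pos hc hθ0
  have hApos : 0 < A := by nlinarith
  have hL0 : (0:ℝ) < L := by linarith
  have hu0pos : 0 < A * L := mul_pos hApos hL0
  have hupos : 0 < u := lt_of_lt_of_le hu0pos hu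
  have hlogu : Real.log u ≤ Real.log (A * L) + (u / (A * L) - 1) := by
    have h := Real.log_le_sub_one_of_pos (div_pos hupos hu0pos)
    rw [Real.log_div (ne_of_gt hupos) (ne_of_gt hu0pos)] at h
    linarith
  have hlogAL : Real.log (A * L) ≤ 2 * L := by
    rw [Real.log_mul (ne_of_gt hApos) (ne_of_gt hL0)]
    linarith
  -- (4/θ) * (u/(A*L)) ≤ c*u/6
  have h4 : (4 / θ) * (u / (A * L)) ≤ c * u / 6 := by
    rw [div_mul_div_comm, div_le_div_iff₀ (by positivity) (by norm_num)]
    have hsub : c * u * (θ * (A * L)) = 24 * (u * L) := by linear_combination u * L * hA24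
    nlinarith [mul_nonneg (le_of_lt hupos) (sub_nonneg.2 hL)]
  -- c * u ≥ 24 L / θ · ... : c u ≥ c (A L) and c θ (A L) = 24 L
  have hcu : 24 * L ≤ c * θ * u := by
    have : c * θ * (A * L) = 24 * L := by linear_combination L * hA24
    nlinarith [mul_le_mul_of_nonneg_left hu (le_of_lt hcθ)]
  -- reduce to multiplied-out form
  have hθne : θ ≠ 0 := ne_of_gt hθ0
  rw [← mul_le_mul_iff_right₀ hθ0]
  have hexp : θ * (4 + (4 / θ) * Real.log u) = 4 * θ + 4 * Real.log u := by
    field_simp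
  rw [hexp]
  have h5 : (4 / θ) * Real.log u ≤ (4 / θ) * (Real.log (A * L) + (u / (A * L) - 1)) :=
    mul_le_mul_of_nonneg_left hlogu (by positivity)
  have h6 : 4 * Real.log u = θ * ((4 / θ) * Real.log u) := by field_simp
  have h7 : θ * ((4 / θ) * (Real.log (A * L) + (u / (A * L) - 1)))
      = 4 * Real.log (A * L) + θ * ((4/θ) * (u / (A*L))) - 4 := by
    field_simp
    ring
  have h8 : θ * ((4/θ) * (u / (A*L))) ≤ θ * (c * u / 6) :=
    mul_le_mul_of_nonneg_left h4 (le_of_lt hθ0)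
  have h9 : θ * ((4 / θ) * Real.log u) ≤ θ * ((4 / θ) * (Real.log (A * L) + (u / (A * L) - 1))) :=
    mul_le_mul_of_nonneg_left h5 (le_of_lt hθ0)
  -- goal : 4*θ + 4*log u ≤ θ*(c*u)
  have h10 : θ * (c * u / 6) = θ * c * u / 6 := by ring
  nlinarith [hcu, h6, h7, h8, h9]

set_option maxHeartbeats 1000000 in
theorem fAux_sum_bound
    (θ σ : ℝ) (hθ0 : 0 < θ) (hθ1 : θ < 1) (hσ0 : 0 < σ) (hσ1 : σ ≤ 1)
    (ℓ : ℤ →₀ ℤ) :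
    ∑ i ∈ ℓ.support, fAux θ σ i |(ℓ i : ℝ)| ≤
      21 * iSharp θ σ * Real.log (iSharp θ σ) := by
  classical
  have h1θ : 0 < 1 - θ := by linarith
  have hden : 0 < σ * θ * (1 - θ) := by positivity
  have hden1 : σ * θ * (1 - θ) ≤ 1 := by
    have h4 : θ * (1 - θ) ≤ 1 := by nlinarith [sq_nonneg (1 - 2 * θ)]
    nlinarith [mul_pos hθ0 h1θ]
  set c : ℝ := σ * (1 - θ) / 13 with hcdef
  set A : ℝ := 312 / (σ * θ * (1 - θ)) with hAdef
  set L : ℝ := Real.log (156 / (σ * θ * (1 - θ))) with hLdef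
  set I : ℝ := iSharp θ σ with hIdef
  have hc : 0 < c := by rw [hcdef]; positivity
  have hc1 : c ≤ 1 := by rw [hcdef]; nlinarith
  have hA312 : 312 ≤ A := by
    rw [hAdef, le_div_iff₀ hden]; nlinarith
  have hApos : 0 < A := by linarith
  have hA2 : A / 2 = 156 / (σ * θ * (1 - θ)) := by
    rw [hAdef]; ring
  have hLA2 : L = Real.log (A / 2) := by rw [hLdef, hA2]
  have hL1 : 1 ≤ L := by
    rw [hLA2, Real.le_log_iff_exp_le (by positivity)]
    have := Real.exp_one_lt_d9
    linarith
  have hL0 : 0 < L := by linarith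
  have hA24 : c * θ * A = 24 := by
    rw [hcdef, hAdef]; field_simp; ring
  have hALpos : 0 < A * L := mul_pos hApos hL0
  have hI : I = (A * L) ^ (2 / θ) := by
    rw [hIdef, iSharp, hLdef, hAdef]
  have hI1 : 1 ≤ I := by
    rw [hI]
    calc (1:ℝ) = 1 ^ (2 / θ) := (Real.one_rpow _).symm
      _ ≤ (A * L) ^ (2 / θ) := Real.rpow_le_rpow (by norm_num) (by nlinarith) (by positivity)
  have hI0 : 0 < I := by linarith
  have hIθ : I ^ (θ / 2) = A * L := by
    rw [hI, ← Real.rpow_mul (le_of_lt hALpos),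
      show (2 / θ) * (θ / 2) = 1 by field_simp, Real.rpow_one]
  have hlogI : Real.log I = (2 / θ) * Real.log (A * L) := by
    rw [hI, Real.log_rpow hALpos]
  have hlogAL_ge : L ≤ Real.log (A * L) := by
    rw [Real.log_mul (ne_of_gt hApos) (ne_of_gt hL0)]
    have h1 : L ≤ Real.log A := by
      rw [hLA2]; exact Real.log_le_log (by positivity) (by linarith)
    have h2 : 0 ≤ Real.log L := Real.log_nonneg hL1
    linarith
  have hALlog0 : 0 ≤ Real.log (A * L) := by linarith
  have h2θ : 2 ≤ 2 / θ := by rw [le_div_iff₀ hθ0]; linarith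
  have hlogI_ge : 2 * L ≤ Real.log I := by
    rw [hlogI]
    nlinarith [mul_nonneg (sub_nonneg.2 h2θ) hALlog0]
  have hlogIpos : 0 < Real.log I := by linarith
  have hlog2c : Real.log 2 - Real.log c ≤ L := by
    have h2c : 2 / c ≤ A / 2 := by
      rw [div_le_div_iff₀ hc (by norm_num)]
      nlinarith [mul_nonneg (mul_pos hc hApos).le h1θ.le]
    have hh := Real.log_le_log (by positivity) h2c
    rw [Real.log_div (by norm_num) (ne_of_gt hc), ← hLA2] at hh
    linarith
  have hLAbound : Real.log A ≤ L + 1 := by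
    have : Real.log A = Real.log (A / 2) + Real.log 2 := by
      rw [← Real.log_mul (by positivity) (by norm_num)]
      congr 1; ring
    have hl2 : Real.log 2 ≤ 1 := by
      have := Real.log_le_sub_one_of_pos (by norm_num : (0:ℝ) < 2); linarith
    rw [this, ← hLA2]; linarith
  have hLLbound : Real.log L ≤ L - 1 := Real.log_le_sub_one_of_pos hL0
  have hjb1 : ∀ i : ℤ, 1 ≤ jb i := fun i => le_max_right _ _
  have hjb0 : ∀ i : ℤ, 0 < jb i := fun i => lt_of_lt_of_le one_pos (hjb1 i)
  have hjbT : ∀ i : ℤ, 1 ≤ jb i ^ (θ / 2) := fun i =>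
    Real.one_le_rpow (hjb1 i) (by positivity)
  have hTM : ∀ i : ℤ, jb i ^ (θ / 2) ≤ jb i := by
    intro i
    calc jb i ^ (θ / 2) ≤ jb i ^ (1:ℝ) :=
          Real.rpow_le_rpow_of_exponent_le (hjb1 i) (by linarith)
      _ = jb i := Real.rpow_one _
  have hx1 : ∀ i ∈ ℓ.support, (1:ℝ) ≤ |((ℓ i : ℤ) : ℝ)| := by
    intro i hi
    have hne : ℓ i ≠ 0 := Finsupp.mem_support_iff.1 hi
    have h1 : (1:ℤ) ≤ |ℓ i| := Int.one_le_abs (by exact_mod_cast hne)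
    calc (1:ℝ) ≤ ((|ℓ i| : ℤ) : ℝ) := by exact_mod_cast h1
      _ = |((ℓ i : ℤ) : ℝ)| := by push_cast; ring
  have hfAux : ∀ (i : ℤ) (x : ℝ), fAux θ σ i x =
      -c * x * jb i ^ (θ / 2) + Real.log (1 + x ^ 2 * jb i ^ 2) := by
    intro i x; rw [hcdef]; rfl
  -- per-term bound on the small indices
  have hbound : ∀ i ∈ ℓ.support, jb i ≤ I → fAux θ σ i |((ℓ i : ℤ) : ℝ)| ≤ 3 * Real.log I := by
    intro i hi hji
    have hcore := fab_core1 c (jb i) (jb i ^ (θ / 2)) |((ℓ i : ℤ) : ℝ)| hc hc1 (hjb1 i)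
      (hjbT i) (hTM i) (abs_nonneg _)
    have hlogjb : Real.log (jb i) ≤ Real.log I := Real.log_le_log (hjb0 i) hji
    rw [hfAux]
    linarith
  -- terms with large index are nonpositive
  have hnonpos : ∀ i ∈ ℓ.support, ¬(jb i ≤ I) → fAux θ σ i |((ℓ i : ℤ) : ℝ)| ≤ 0 := by
    intro i hi hji
    have hIjb : I ≤ jb i := le_of_lt (lt_of_not_ge hji)
    have hu : A * L ≤ jb i ^ (θ / 2) := by
      rw [← hIθ]
      exact Real.rpow_le_rpow (le_of_lt hI0) hIjb (by positivity)
    have h3 := fab_core3 c θ A L (jb i ^ (θ / 2)) hc hθ0 hθ1 hA24 hL1 hLAbound hLLbound hu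
    have hlr : Real.log (jb i ^ (θ / 2)) = (θ / 2) * Real.log (jb i) :=
      Real.log_rpow (hjb0 i) _
    have hsimp : (4 / θ) * ((θ / 2) * Real.log (jb i)) = 2 * Real.log (jb i) := by
      field_simp; ring
    have hcT : 4 + 2 * Real.log (jb i) ≤ c * (jb i ^ (θ / 2)) := by
      rw [hlr, hsimp] at h3; exact h3
    have hcore := fab_core2 c (jb i) (jb i ^ (θ / 2)) |((ℓ i : ℤ) : ℝ)| hc (hjb1 i)
      (hx1 i hi) hcT
    rw [hfAux]
    linarith
  -- split the sum
  have hsplit := Finset.sum_filter_add_sum_filter_not ℓ.support (fun i => jb i ≤ I)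
    (fun i => fAux θ σ i |((ℓ i : ℤ) : ℝ)|)
  set S := ℓ.support.filter (fun i => jb i ≤ I) with hS
  have hsum2 : ∑ i ∈ ℓ.support.filter (fun i => ¬ jb i ≤ I), fAux θ σ i |((ℓ i : ℤ) : ℝ)| ≤ 0 :=
    Finset.sum_nonpos (fun i hi => by
      rw [Finset.mem_filter] at hi
      exact hnonpos i hi.1 hi.2)
  have hsum1 : ∑ i ∈ S, fAux θ σ i |((ℓ i : ℤ) : ℝ)| ≤ (S.card : ℝ) * (3 * Real.log I) := by
    have := Finset.sum_le_card_nsmul S (fun i => fAux θ σ i |((ℓ i : ℤ) : ℝ)|)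
      (3 * Real.log I) (fun i hi => by
        rw [hS, Finset.mem_filter] at hi
        exact hbound i hi.1 hi.2)
    simpa [nsmul_eq_mul] using this
  -- cardinality bound
  have hsub : S ⊆ Finset.Icc (-⌊I⌋) ⌊I⌋ := by
    intro i hi
    rw [hS, Finset.mem_filter] at hi
    have habs : |(i : ℝ)| ≤ I := le_trans (le_max_left _ _) hi.2
    rw [Finset.mem_Icc]
    constructor
    · rw [neg_le]
      refine Int.le_floor.2 ?_
      push_cast
      calc -(i:ℝ) ≤ |(i:ℝ)| := neg_le_abs _
        _ ≤ I := habs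
    · refine Int.le_floor.2 ?_
      calc (i:ℝ) ≤ |(i:ℝ)| := le_abs_self _
        _ ≤ I := habs
  have hfloor0 : 0 ≤ ⌊I⌋ := Int.floor_nonneg.2 (le_of_lt hI0)
  have hcard : (S.card : ℝ) ≤ 3 * I := by
    have h1 : S.card ≤ (Finset.Icc (-⌊I⌋) ⌊I⌋).card := Finset.card_le_card hsub
    rw [Int.card_Icc] at h1
    have h2 : (S.card : ℤ) ≤ 2 * ⌊I⌋ + 1 := by
      have h3 : ((⌊I⌋ + 1 - -⌊I⌋).toNat : ℤ) = 2 * ⌊I⌋ + 1 := by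
        rw [Int.toNat_of_nonneg (by omega)]; ring
      omega
    have h4 : ((⌊I⌋ : ℤ) : ℝ) ≤ I := Int.floor_le I
    have h5 : (S.card : ℝ) ≤ 2 * ((⌊I⌋ : ℤ) : ℝ) + 1 := by exact_mod_cast h2
    linarith
  have hfinal : (S.card : ℝ) * (3 * Real.log I) ≤ 21 * I * Real.log I := by
    have h6 : (S.card : ℝ) * (3 * Real.log I) ≤ (3 * I) * (3 * Real.log I) :=
      mul_le_mul_of_nonneg_right hcard (by positivity)
    nlinarith [mul_pos hI0 hlogIpos]
  have htot := add_le_add hsum1 hsum2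
  rw [hsplit, add_zero] at htot
  exact le_trans htot hfinal

end
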